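/- Let (uₙ) be a sequence of twice weakly differentiable functions uₙ: ℝ → ℂ such that the quantities ‖cosh(·)uₙ''‖_{L²(ℝ)}, ‖uₙ'‖_{L²(ℝ)}, and ‖sech(·)uₙ‖_{L²(ℝ)} are uniformly bounded in n. Then there exists a subsequence (u_{n_k}) such that (sech(·)·u_{n_k}) converges in L²(ℝ). -/

import Mathlib

open MeasureTheory Real Filter Set Topology
open scoped ENNReal NNReal

lemma myint_exp_neg_abs : Integrable (fun x : ℝ => exp (-|x|)) := by
  have h1 : IntegrableOn (fun x : ℝ => exp (-|x|)) (Ici (0:ℝ)) := by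
    have h := (integrableOn_Ici_iff_integrableOn_Ioi).mpr
      (exp_neg_integrableOn_Ioi 0 (by norm_num : (0:ℝ) < 1))
    refine h.congr_fun (fun x hx => ?_) measurableSet_Ici
    simp [abs_of_nonneg (mem_Ici.mp hx : (0:ℝ) ≤ x)]
  have h2 : IntegrableOn (fun x : ℝ => exp (-|x|)) (Iic (0:ℝ)) := by
    refine (integrableOn_exp_Iic 0).congr_fun (fun x hx => ?_) measurableSet_Iic
    rw [abs_of_nonpos (hx : x ≤ (0:ℝ)), neg_neg]
  have h3 := h2.union h1
  rwa [Set.Iic_union_Ici, integrableOn_univ] at h3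

lemma myint_exp_neg_two_abs : Integrable (fun x : ℝ => exp (-(2*|x|))) := by
  refine myint_exp_neg_abs.mono' ((continuous_exp.comp ((continuous_abs.const_smul (2:ℝ)).neg)).aestronglyMeasurable) (ae_of_all _ fun x => ?_)
  rw [Real.norm_eq_abs, abs_of_nonneg (exp_pos _).le]
  exact exp_le_exp.2 (by nlinarith [abs_nonneg x])

lemma myanchor {B : ℝ} (hB : 0 ≤ B) (f : ℝ → ℂ) (hle : eLpNorm f 2 volume ≤ ENNReal.ofReal B) :
    ∃ y ∈ Icc (0:ℝ) 1, ‖f y‖ ≤ B + 1 := by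
  by_contra hc
  push_neg at hc
  have hres : eLpNorm f 2 (volume.restrict (Icc (0:ℝ) 1)) ≤ ENNReal.ofReal B :=
    le_trans (eLpNorm_mono_measure f Measure.restrict_le_self) hle
  have hμ : (volume.restrict (Icc (0:ℝ) 1)) Set.univ = 1 := by
    rw [Measure.restrict_apply_univ, Real.volume_Icc]; norm_num
  have hμ0 : (volume.restrict (Icc (0:ℝ) 1)) ≠ 0 := by
    intro h; rw [h] at hμ; simp at hμ
  have hconst : eLpNorm (fun _ : ℝ => (B+1:ℝ)) 2 (volume.restrict (Icc (0:ℝ) 1)) ≤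
      eLpNorm f 2 (volume.restrict (Icc (0:ℝ) 1)) := by
    refine eLpNorm_mono_ae ?_
    refine (ae_restrict_iff' measurableSet_Icc).2 (ae_of_all _ fun x hx => ?_)
    rw [Real.norm_eq_abs, abs_of_nonneg (by linarith)]
    exact (hc x hx).le
  rw [eLpNorm_const _ two_ne_zero hμ0, hμ] at hconst
  simp only [ENNReal.one_rpow, mul_one] at hconst
  have hfin : ENNReal.ofReal (B+1) ≤ ENNReal.ofReal B := by
    calc ENNReal.ofReal (B+1) = (‖(B+1:ℝ)‖₊ : ℝ≥0∞) := by
          rw [← enorm_eq_nnnorm, ← ofReal_norm, Real.norm_eq_abs, abs_of_nonneg (by linarith)]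
      _ ≤ _ := le_trans hconst hres
  rw [ENNReal.ofReal_le_ofReal_iff hB] at hfin
  linarith

lemma mysech_le (x : ℝ) : (Real.cosh x)⁻¹ ≤ 2 * exp (-|x|) := by
  have hc := Real.cosh_pos x
  have he : exp |x| ≤ 2 * Real.cosh x := by
    rw [Real.cosh_eq]
    rcases abs_cases x with ⟨h, _⟩ | ⟨h, _⟩ <;> rw [h] <;> nlinarith [exp_pos x, exp_pos (-x)]
  rw [exp_neg]
  have hex := exp_pos |x|
  have h1 : (Real.cosh x)⁻¹ * Real.cosh x = 1 := inv_mul_cancel₀ hc.ne'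
  have h2 : (exp |x|)⁻¹ * exp |x| = 1 := inv_mul_cancel₀ hex.ne'
  nlinarith [inv_pos.2 hc, inv_pos.2 hex,
    mul_le_mul_of_nonneg_left he (mul_nonneg (inv_pos.2 hc).le (inv_pos.2 hex).le)]

lemma mysech_memL2 : MemLp (fun x : ℝ => (Real.cosh x)⁻¹) 2 (volume : Measure ℝ) := by
  have hcont : Continuous fun x : ℝ => (Real.cosh x)⁻¹ :=
    Real.continuous_cosh.inv₀ fun x => (Real.cosh_pos x).ne'
  rw [memLp_two_iff_integrable_sq hcont.aestronglyMeasurable]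
  have hint : Integrable (fun x : ℝ => 4 * exp (-(2*|x|))) :=
    myint_exp_neg_two_abs.const_mul 4
  refine hint.mono' (by exact (hcont.pow 2).aestronglyMeasurable) (ae_of_all _ fun x => ?_)
  have h1 := mysech_le x
  have h2 : exp (-|x|) * exp (-|x|) = exp (-(2*|x|)) := by rw [← exp_add]; ring_nf
  have h3 := (inv_pos.2 (Real.cosh_pos x)).le
  rw [Real.norm_eq_abs, abs_of_nonneg (by positivity)]
  nlinarith [exp_pos (-|x|)]

set_option maxHeartbeats 1000000 in
/-- Compactness of the embedding `𝓗²₋ ↪ 𝓗`: any sequence `(uₙ)` with uniformly bounded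
`‖cosh·uₙ''‖_{L²}`, `‖uₙ'‖_{L²}`, `‖sech·uₙ‖_{L²}` has a subsequence along which
`sech·u_{n_k}` converges in `L²(ℝ)`. -/
theorem stmt_5 (u du ddu : ℕ → ℝ → ℂ) (C : ℝ)
    (hderiv : ∀ n x, HasDerivAt (u n) (du n x) x)
    (hderiv2 : ∀ n x, HasDerivAt (du n) (ddu n x) x)
    (h1 : ∀ n, eLpNorm (fun x => Real.cosh x • ddu n x) 2 volume ≤ ENNReal.ofReal C)
    (h2 : ∀ n, eLpNorm (du n) 2 volume ≤ ENNReal.ofReal C)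
    (h3 : ∀ n, eLpNorm (fun x => (Real.cosh x)⁻¹ • u n x) 2 volume ≤ ENNReal.ofReal C) :
    ∃ φ : ℕ → ℕ, StrictMono φ ∧ ∃ g : ℝ → ℂ, MemLp g 2 (volume : Measure ℝ) ∧
      Tendsto (fun k => eLpNorm (fun x => (Real.cosh x)⁻¹ • u (φ k) x - g x) 2 volume)
        atTop (nhds 0) := by
  set B := max C 0 with hBdef
  have hB : 0 ≤ B := le_max_right _ _
  have hCB : ENNReal.ofReal C ≤ ENNReal.ofReal B := ENNReal.ofReal_le_ofReal (le_max_left _ _)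
  replace h1 : ∀ n, eLpNorm (fun x => Real.cosh x • ddu n x) 2 volume ≤ ENNReal.ofReal B :=
    fun n => (h1 n).trans hCB
  replace h2 : ∀ n, eLpNorm (du n) 2 volume ≤ ENNReal.ofReal B := fun n => (h2 n).trans hCB
  replace h3 : ∀ n, eLpNorm (fun x => (Real.cosh x)⁻¹ • u n x) 2 volume ≤ ENNReal.ofReal B :=
    fun n => (h3 n).trans hCB
  have hcosh_pos : ∀ x : ℝ, (0:ℝ) < Real.cosh x := Real.cosh_pos
  have hu_cont : ∀ n, Continuous (u n) :=
    fun n => continuous_iff_continuousAt.2 fun x => (hderiv n x).continuousAt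
  have hdu_cont : ∀ n, Continuous (du n) :=
    fun n => continuous_iff_continuousAt.2 fun x => (hderiv2 n x).continuousAt
  have hddu_sm : ∀ n, StronglyMeasurable (ddu n) := by
    intro n
    have h : ddu n = deriv (du n) := funext fun x => ((hderiv2 n x).deriv).symm
    rw [h]; exact stronglyMeasurable_deriv _
  set w : ℝ → ℝ := fun x => (Real.cosh x)⁻¹ with hwdef
  have hw_pos : ∀ x, 0 < w x := fun x => inv_pos.2 (hcosh_pos x)
  have hw_le_one : ∀ x, w x ≤ 1 := by
    intro x
    have h := Real.one_le_cosh x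
    have := hcosh_pos x
    rw [hwdef]
    simp only []
    rw [inv_le_one_iff₀]
    right; exact h
  have hw_cont : Continuous w := Real.continuous_cosh.inv₀ fun x => (hcosh_pos x).ne'
  have hF_mem : ∀ n, MemLp (fun x => Real.cosh x • ddu n x) 2 volume := fun n =>
    ⟨(Real.continuous_cosh.stronglyMeasurable.smul (hddu_sm n)).aestronglyMeasurable,
      lt_of_le_of_lt (h1 n) ENNReal.ofReal_lt_top⟩
  have hw_mem : MemLp w 2 volume := mysech_memL2
  have hddu_int : ∀ n, Integrable (ddu n) volume := by
    intro n
    have hsm : MemLp (w • fun x => Real.cosh x • ddu n x) 1 volume :=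
      (hF_mem n).smul hw_mem
    have heq : (w • fun x => Real.cosh x • ddu n x) = ddu n := by
      funext x
      show w x • Real.cosh x • ddu n x = ddu n x
      rw [smul_smul, inv_mul_cancel₀ (hcosh_pos x).ne', one_smul]
    rw [heq] at hsm
    exact memLp_one_iff_integrable.mp hsm
  set s : ℝ := (∫ x : ℝ, w x ^ (2:ℝ)) ^ (1/(2:ℝ)) with hsdef
  have hs0 : 0 ≤ s := Real.rpow_nonneg (integral_nonneg fun x => Real.rpow_nonneg (hw_pos x).le _) _
  have hddu_L1 : ∀ n, ∫ x : ℝ, ‖ddu n x‖ ≤ s * B := by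
    intro n
    have hconj : Real.HolderConjugate 2 2 := Real.HolderConjugate.two_two
    have h2e : ENNReal.ofReal (2:ℝ) = 2 := by norm_num
    have hH := integral_mul_le_Lp_mul_Lq_of_nonneg (μ := volume) hconj
      (ae_of_all _ fun x => (hw_pos x).le)
      (ae_of_all _ fun x => norm_nonneg (Real.cosh x • ddu n x))
      (h2e ▸ hw_mem) (h2e ▸ (hF_mem n).norm)
    have hLHS : ∫ x : ℝ, w x * ‖Real.cosh x • ddu n x‖ = ∫ x : ℝ, ‖ddu n x‖ := by
      refine integral_congr_ae (ae_of_all _ fun x => ?_)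
      show w x * ‖Real.cosh x • ddu n x‖ = ‖ddu n x‖
      rw [norm_smul, Real.norm_eq_abs, abs_of_nonneg (hcosh_pos x).le, ← mul_assoc,
        inv_mul_cancel₀ (hcosh_pos x).ne', one_mul]
    have hRB : (∫ x : ℝ, ‖Real.cosh x • ddu n x‖ ^ (2:ℝ)) ^ (1/(2:ℝ)) ≤ B := by
      have he := (hF_mem n).eLpNorm_eq_integral_rpow_norm two_ne_zero ENNReal.ofNat_ne_top
      have h1n := h1 n
      rw [he, ENNReal.ofReal_le_ofReal_iff hB] at h1n
      simpa [ENNReal.toReal_ofNat, one_div] using h1n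
    rw [hLHS] at hH
    exact hH.trans (mul_le_mul_of_nonneg_left hRB hs0)
  set L : ℝ := (B+1) + s*B with hLdef
  have hL0 : 0 ≤ L := by positivity
  have hdu_bd : ∀ n x, ‖du n x‖ ≤ L := by
    intro n x
    obtain ⟨y, hy, hyb⟩ := myanchor hB (du n) (h2 n)
    have hii : IntervalIntegrable (ddu n) volume y x := (hddu_int n).intervalIntegrable
    have hftc := intervalIntegral.integral_eq_sub_of_hasDerivAt
      (fun t _ => hderiv2 n t) hii
    have hnorm : ‖du n x - du n y‖ ≤ ∫ t : ℝ, ‖ddu n t‖ := by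
      rw [← hftc]
      refine le_trans (intervalIntegral.norm_integral_le_integral_norm_uIoc) ?_
      exact setIntegral_le_integral (hddu_int n).norm (ae_of_all _ fun t => norm_nonneg _)
    calc ‖du n x‖ = ‖du n y + (du n x - du n y)‖ := by rw [add_sub_cancel]
      _ ≤ ‖du n y‖ + ‖du n x - du n y‖ := norm_add_le _ _
      _ ≤ (B+1) + s*B := add_le_add hyb (hnorm.trans (hddu_L1 n))
  have hulip : ∀ n, LipschitzWith L.toNNReal (u n) := by
    intro n
    refine lipschitzWith_of_nnnorm_deriv_le (fun x => (hderiv n x).differentiableAt) fun x => ?_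
    rw [(hderiv n x).deriv, ← norm_toNNReal]
    exact Real.toNNReal_mono (hdu_bd n x)
  set A : ℝ := (B+1) * Real.cosh 1 + L with hAdef
  have hA0 : 0 ≤ A := by
    have := hcosh_pos 1
    nlinarith
  have hu_bd : ∀ n x, ‖u n x‖ ≤ A + L * |x| := by
    intro n x
    obtain ⟨y, hy, hyb⟩ := myanchor hB (fun t => (Real.cosh t)⁻¹ • u n t) (h3 n)
    have hy1 : ‖u n y‖ ≤ (B+1) * Real.cosh y := by
      rw [norm_smul, Real.norm_eq_abs, abs_of_nonneg (inv_pos.2 (hcosh_pos y)).le] at hyb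
      nlinarith [mul_le_mul_of_nonneg_right hyb (hcosh_pos y).le,
        inv_mul_cancel₀ (hcosh_pos y).ne', norm_nonneg (u n y), hcosh_pos y]
    have hcy : Real.cosh y ≤ Real.cosh 1 := by
      rw [Real.cosh_le_cosh]
      rw [abs_one, abs_of_nonneg hy.1]
      exact hy.2
    have hdist : ‖u n x - u n y‖ ≤ L * |x - y| := by
      have hd := (hulip n).dist_le_mul x y
      rw [dist_eq_norm, Real.dist_eq, Real.coe_toNNReal _ hL0] at hd
      exact hd
    have hxy : |x - y| ≤ |x| + 1 := by
      have : |x - y| ≤ |x| + |y| := abs_sub _ _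
      have : |y| ≤ 1 := by rw [abs_of_nonneg hy.1]; exact hy.2
      calc |x - y| ≤ |x| + |y| := abs_sub _ _
        _ ≤ |x| + 1 := by linarith
    calc ‖u n x‖ = ‖u n y + (u n x - u n y)‖ := by rw [add_sub_cancel]
      _ ≤ ‖u n y‖ + ‖u n x - u n y‖ := norm_add_le _ _
      _ ≤ (B+1) * Real.cosh 1 + L * (|x| + 1) := by
          refine add_le_add (hy1.trans ?_) (hdist.trans ?_)
          · exact mul_le_mul_of_nonneg_left hcy (by linarith)
          · exact mul_le_mul_of_nonneg_left hxy hL0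
      _ = A + L * |x| := by rw [hAdef]; ring
  set M : ℝ := 4 * (A + L) with hMdef
  have hM0 : 0 ≤ M := by nlinarith
  set D : ℝ → ℝ := fun x => M * exp (-(|x| / 2)) with hDdef
  have hv_bd : ∀ n x, ‖(Real.cosh x)⁻¹ • u n x‖ ≤ D x := by
    intro n x
    rw [norm_smul, Real.norm_eq_abs, abs_of_nonneg (hw_pos x).le]
    have h1x : (Real.cosh x)⁻¹ ≤ 2 * exp (-|x|) := mysech_le x
    have ht : 0 ≤ |x| := abs_nonneg x
    have hu := hu_bd n x
    have he1 : exp (-(|x|/2)) * exp (-(|x|/2)) = exp (-|x|) := by rw [← exp_add]; ring_nf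
    have he2 : 1 + |x|/2 ≤ exp (|x|/2) := by
      have := Real.add_one_le_exp (|x|/2); linarith
    have he3 : exp (-(|x|/2)) * exp (|x|/2) = 1 := by rw [← exp_add]; simp
    have he4 : (0:ℝ) < exp (-(|x|/2)) := exp_pos _
    have h5 : 2*(A + L*|x|) ≤ 4*(A+L) * exp (|x|/2) := by
      nlinarith [mul_nonneg hA0 ht, mul_nonneg hL0 ht,
        mul_le_mul_of_nonneg_left he2 (by nlinarith : (0:ℝ) ≤ 4*(A+L))]
    have h6 : 2*(A+L*|x|) * exp (-(|x|/2)) ≤ 4*(A+L) := by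
      calc 2*(A+L*|x|) * exp (-(|x|/2)) ≤ 4*(A+L) * exp (|x|/2) * exp (-(|x|/2)) :=
            mul_le_mul_of_nonneg_right h5 he4.le
        _ = 4*(A+L) * (exp (-(|x|/2)) * exp (|x|/2)) := by ring
        _ = 4*(A+L) := by rw [he3, mul_one]
    have hkey : (A + L * |x|) * (2 * exp (-|x|)) ≤ M * exp (-(|x|/2)) := by
      rw [hMdef]
      calc (A + L*|x|) * (2 * exp (-|x|))
          = (2*(A+L*|x|) * exp (-(|x|/2))) * exp (-(|x|/2)) := by rw [← he1]; ring
        _ ≤ 4*(A+L) * exp (-(|x|/2)) := mul_le_mul_of_nonneg_right h6 he4.le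
    calc (Real.cosh x)⁻¹ * ‖u n x‖ ≤ (2 * exp (-|x|)) * (A + L * |x|) := by
          refine mul_le_mul h1x hu (norm_nonneg _) (by positivity)
      _ = (A + L * |x|) * (2 * exp (-|x|)) := by ring
      _ ≤ M * exp (-(|x|/2)) := hkey
  have hv_bd' : ∀ n x, ‖(Real.cosh x)⁻¹ • u n x‖ ≤ M := by
    intro n x
    refine (hv_bd n x).trans ?_
    have h : exp (-(|x|/2)) ≤ 1 := by
      rw [Real.exp_le_one_iff]
      have := abs_nonneg x; linarith
    rw [hDdef]
    calc M * exp (-(|x|/2)) ≤ M * 1 := mul_le_mul_of_nonneg_left h hM0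
      _ = M := mul_one M
  have habs_sinh : ∀ x : ℝ, |Real.sinh x| ≤ Real.cosh x := by
    intro x
    have h := Real.cosh_sq x
    have := hcosh_pos x
    rw [abs_le]
    constructor <;> nlinarith
  have hv_deriv : ∀ n x, HasDerivAt (fun t => (Real.cosh t)⁻¹ • u n t)
      ((Real.cosh x)⁻¹ • du n x + (-Real.sinh x / Real.cosh x ^ 2) • u n x) x := by
    intro n x
    exact ((Real.hasDerivAt_cosh x).inv (hcosh_pos x).ne').smul (hderiv n x)
  set Kv : ℝ := M + L with hKvdef
  have hKv0 : 0 ≤ Kv := by nlinarith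
  have hvlip : ∀ n, LipschitzWith Kv.toNNReal (fun t => (Real.cosh t)⁻¹ • u n t) := by
    intro n
    refine lipschitzWith_of_nnnorm_deriv_le (fun x => (hv_deriv n x).differentiableAt) fun x => ?_
    rw [(hv_deriv n x).deriv, ← norm_toNNReal]
    refine Real.toNNReal_mono ?_
    refine le_trans (norm_add_le _ _) ?_
    have e1 : ‖(-Real.sinh x / Real.cosh x ^ 2) • u n x‖ ≤ M := by
      rw [norm_smul, Real.norm_eq_abs]
      have habs : |(-Real.sinh x / Real.cosh x ^ 2)| ≤ (Real.cosh x)⁻¹ := by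
        rw [abs_div, abs_neg, abs_of_pos (by positivity : (0:ℝ) < Real.cosh x ^ 2)]
        rw [div_le_iff₀ (by positivity : (0:ℝ) < Real.cosh x ^ 2)]
        have hc := hcosh_pos x
        have : (Real.cosh x)⁻¹ * Real.cosh x ^ 2 = Real.cosh x := by
          rw [sq, ← mul_assoc, inv_mul_cancel₀ hc.ne', one_mul]
        rw [this]
        exact habs_sinh x
      calc |(-Real.sinh x / Real.cosh x ^ 2)| * ‖u n x‖
          ≤ (Real.cosh x)⁻¹ * ‖u n x‖ := mul_le_mul_of_nonneg_right habs (norm_nonneg _)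
        _ = ‖(Real.cosh x)⁻¹ • u n x‖ := by
            rw [norm_smul, Real.norm_eq_abs, abs_of_nonneg (hw_pos x).le]
        _ ≤ M := hv_bd' n x
    have e2 : ‖(Real.cosh x)⁻¹ • du n x‖ ≤ L := by
      rw [norm_smul, Real.norm_eq_abs, abs_of_nonneg (hw_pos x).le]
      calc (Real.cosh x)⁻¹ * ‖du n x‖ ≤ 1 * L := by
            refine mul_le_mul (hw_le_one x) (hdu_bd n x) (norm_nonneg _) one_pos.le
        _ = L := one_mul L
    rw [hKvdef]
    linarith
  obtain ⟨f0, hf0S, φ, hφ, hconv⟩ := (isCompact_univ_pi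
      (fun q : ℚ => isCompact_closedBall (0:ℂ) M)).tendsto_subseq
    (x := fun n => fun q : ℚ => (Real.cosh (q:ℝ))⁻¹ • u n (q:ℝ))
    (fun n => Set.mem_univ_pi.2 fun q => Metric.mem_closedBall.2
      (by rw [dist_zero_right]; exact hv_bd' n (q:ℝ)))
  have hpt : ∀ q : ℚ, Tendsto (fun k => (Real.cosh (q:ℝ))⁻¹ • u (φ k) (q:ℝ)) atTop (𝓝 (f0 q)) := by
    rw [tendsto_pi_nhds] at hconv
    intro q
    have := hconv q
    simpa [Function.comp] using this
  set Kr : ℝ := (Kv.toNNReal : ℝ) with hKr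
  have hKr0 : 0 ≤ Kr := (Kv.toNNReal).coe_nonneg
  have hcauchy : ∀ x : ℝ, CauchySeq (fun k => (Real.cosh x)⁻¹ • u (φ k) x) := by
    intro x
    rw [Metric.cauchySeq_iff]
    intro ε hε
    obtain ⟨q, hq⟩ := exists_rat_near x (show (0:ℝ) < ε/(4*(Kr+1)) by positivity)
    have hqc : CauchySeq (fun k => (Real.cosh (q:ℝ))⁻¹ • u (φ k) (q:ℝ)) := (hpt q).cauchySeq
    rw [Metric.cauchySeq_iff] at hqc
    obtain ⟨N, hN⟩ := hqc (ε/2) (by positivity)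
    refine ⟨N, fun m hm k hk => ?_⟩
    have hlipd : ∀ j : ℕ, dist ((Real.cosh x)⁻¹ • u (φ j) x)
        ((Real.cosh (q:ℝ))⁻¹ • u (φ j) (q:ℝ)) ≤ Kr * |x - (q:ℝ)| := by
      intro j
      have hd := (hvlip (φ j)).dist_le_mul x (q:ℝ)
      rwa [Real.dist_eq] at hd
    have h4 : Kr * |x - (q:ℝ)| ≤ ε/4 := by
      have h5 : Kr * |x - (q:ℝ)| ≤ Kr * (ε/(4*(Kr+1))) := mul_le_mul_of_nonneg_left hq.le hKr0
      have hd0 : (0:ℝ) ≤ ε/(4*(Kr+1)) := by positivity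
      have hdε : 4*(Kr+1)*(ε/(4*(Kr+1))) = ε := by
        field_simp
      nlinarith [mul_le_mul_of_nonneg_right (by linarith : Kr ≤ Kr + 1) hd0]
    have htri := dist_triangle4 ((Real.cosh x)⁻¹ • u (φ m) x)
      ((Real.cosh (q:ℝ))⁻¹ • u (φ m) (q:ℝ)) ((Real.cosh (q:ℝ))⁻¹ • u (φ k) (q:ℝ))
      ((Real.cosh x)⁻¹ • u (φ k) x)
    have hm1 := hlipd m
    have hk1 := hlipd k
    have hmid := hN m hm k hk
    have hk2 : dist ((Real.cosh (q:ℝ))⁻¹ • u (φ k) (q:ℝ)) ((Real.cosh x)⁻¹ • u (φ k) x)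
        ≤ Kr * |x - (q:ℝ)| := by rw [dist_comm]; exact hk1
    calc dist ((Real.cosh x)⁻¹ • u (φ m) x) ((Real.cosh x)⁻¹ • u (φ k) x) ≤ _ := htri
      _ < ε := by linarith
  choose g hg using fun x : ℝ => cauchySeq_tendsto_of_complete (hcauchy x)
  have hg_bd : ∀ x, ‖g x‖ ≤ D x := fun x =>
    le_of_tendsto ((hg x).norm) (Eventually.of_forall fun k => hv_bd (φ k) x)
  have hv_cont : ∀ n, Continuous (fun x => (Real.cosh x)⁻¹ • u n x) :=
    fun n => hw_cont.smul (hu_cont n)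
  have hg_meas : AEStronglyMeasurable g volume :=
    aestronglyMeasurable_of_tendsto_ae atTop (fun k => (hv_cont (φ k)).aestronglyMeasurable)
      (ae_of_all _ hg)
  have hDc : Continuous D := continuous_const.mul (Real.continuous_exp.comp
    ((continuous_abs.div_const 2).neg))
  have he1 : ∀ x : ℝ, exp (-(|x|/2)) * exp (-(|x|/2)) = exp (-|x|) := by
    intro x; rw [← exp_add]; ring_nf
  have hD_mem : MemLp D 2 volume := by
    rw [memLp_two_iff_integrable_sq hDc.aestronglyMeasurable]
    refine (myint_exp_neg_abs.const_mul (M^2)).mono'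
      ((hDc.pow 2).aestronglyMeasurable) (ae_of_all _ fun x => ?_)
    rw [Real.norm_eq_abs, abs_of_nonneg (by positivity), hDdef]
    have heq : (M * exp (-(|x|/2)))^2 = M^2 * exp (-|x|) := by
      rw [← he1 x]; ring
    rw [heq]
  have hg_mem : MemLp g 2 volume := hD_mem.of_le hg_meas (ae_of_all _ fun x => by
    rw [Real.norm_eq_abs]; exact (hg_bd x).trans (le_abs_self _))
  refine ⟨φ, hφ, g, hg_mem, ?_⟩
  have hsub_meas : ∀ k : ℕ, AEStronglyMeasurable
      (fun x => (Real.cosh x)⁻¹ • u (φ k) x - g x) volume :=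
    fun k => ((hv_cont (φ k)).aestronglyMeasurable).sub hg_meas
  have key : ∀ k : ℕ, eLpNorm (fun x => (Real.cosh x)⁻¹ • u (φ k) x - g x) 2 volume
      = (∫⁻ x, ENNReal.ofReal (‖(Real.cosh x)⁻¹ • u (φ k) x - g x‖ ^ 2) ∂volume)
          ^ (1/(2:ℝ)) := by
    intro k
    rw [eLpNorm_eq_lintegral_rpow_enorm_toReal two_ne_zero ENNReal.ofNat_ne_top]
    simp only [ENNReal.toReal_ofNat]
    congr 1
    refine lintegral_congr fun x => ?_
    rw [← ofReal_norm]
    rw [show ((2:ℝ)) = ((2:ℕ):ℝ) by norm_num, ENNReal.rpow_natCast,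
      ← ENNReal.ofReal_pow (norm_nonneg _)]
  have hbd2 : ∀ k x, ‖(Real.cosh x)⁻¹ • u (φ k) x - g x‖ ≤ 2 * D x := by
    intro k x
    refine (norm_sub_le _ _).trans ?_
    have := hv_bd (φ k) x
    have := hg_bd x
    linarith
  have hD0 : ∀ x, 0 ≤ D x := fun x => by rw [hDdef]; positivity
  have hIlim : Tendsto (fun k => ∫⁻ x,
      ENNReal.ofReal (‖(Real.cosh x)⁻¹ • u (φ k) x - g x‖ ^ 2) ∂volume) atTop (𝓝 0) := by
    have hint2 : Integrable (fun x : ℝ => (2 * D x)^2) := by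
      refine (myint_exp_neg_abs.const_mul (4*M^2)).mono'
        (((continuous_const.mul hDc).pow 2).aestronglyMeasurable) (ae_of_all _ fun x => ?_)
      rw [Real.norm_eq_abs, abs_of_nonneg (by positivity : (0:ℝ) ≤ (2*D x)^2), hDdef]
      have heq : (2*(M * exp (-(|x|/2))))^2 = 4*M^2 * exp (-|x|) := by
        rw [← he1 x]; ring
      show (2*(M * exp (-(|x|/2))))^2 ≤ 4*M^2 * exp (-|x|)
      rw [heq]
    have hfin : ∫⁻ x, ENNReal.ofReal ((2 * D x)^2) ∂volume ≠ ⊤ := by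
      have hf := hint2.2
      rw [hasFiniteIntegral_iff_ofReal (ae_of_all _ fun x => by positivity)] at hf
      exact hf.ne
    have hdct := tendsto_lintegral_of_dominated_convergence' (μ := volume)
      (F := fun k x => ENNReal.ofReal (‖(Real.cosh x)⁻¹ • u (φ k) x - g x‖ ^ 2))
      (f := fun _ => (0:ENNReal))
      (bound := fun x => ENNReal.ofReal ((2 * D x)^2))
      (fun k => (ENNReal.measurable_ofReal.comp_aemeasurable
        (((hsub_meas k).norm.aemeasurable).pow_const 2)))
      (fun k => ae_of_all _ fun x => ENNReal.ofReal_le_ofReal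
        (pow_le_pow_left₀ (norm_nonneg _) (hbd2 k x) 2))
      hfin
      (ae_of_all _ fun x => by
        have h1 : Tendsto (fun k => (Real.cosh x)⁻¹ • u (φ k) x - g x) atTop (𝓝 0) := by
          have := (hg x).sub_const (g x)
          simpa using this
        have h2 : Tendsto (fun k => ‖(Real.cosh x)⁻¹ • u (φ k) x - g x‖) atTop (𝓝 0) := by
          simpa using h1.norm
        have h3 : Tendsto (fun k => ‖(Real.cosh x)⁻¹ • u (φ k) x - g x‖ ^ 2) atTop (𝓝 0) := by
          have := h2.pow 2
          simpa using this
        have h4 := ENNReal.tendsto_ofReal h3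
        simpa using h4)
    simpa using hdct
  have hfinal : Tendsto (fun k => (∫⁻ x,
      ENNReal.ofReal (‖(Real.cosh x)⁻¹ • u (φ k) x - g x‖ ^ 2) ∂volume) ^ (1/(2:ℝ)))
      atTop (𝓝 0) := by
    have hc := (ENNReal.continuous_rpow_const (y := 1/(2:ℝ))).tendsto 0
    have := hc.comp hIlim
    simpa [Function.comp_def, ENNReal.zero_rpow_of_pos (by norm_num : (0:ℝ) < 1/2)] using this
  exact Tendsto.congr (fun k => (key k).symm) hfinal
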